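/- Let 0 < ε < π/2, μ > 0, and let B = √(μ^{-1}λ + A²) with Re B > 0 for λ in the sector Σ_{ε,0} = {λ ∈ ℂ \ {0} : |arg λ| ≤ π − ε} and A ≥ 0. Then D₃ := B³ + AB² + 3A²B − A³ satisfies c(|λ|^{1/2}+A)³ ≤ |D₃| ≤ C(|λ|^{1/2}+A)³ for constants c, C > 0 depending only on ε and μ. -/

import Mathlib

set_option maxHeartbeats 1600000


open Complex


lemma sector_est (z : ℂ) (t γ : ℝ) (ht : 0 ≤ t) (hγ1 : γ ≤ 1) (hγm : -1 ≤ γ)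
    (hsec : -(γ * ‖z‖) ≤ z.re) :
    (1-γ)/2 * (‖z‖ + t)^2 ≤ ‖z + (t:ℂ)‖^2 := by
  have h1 : ‖z+(t:ℂ)‖^2 = (z.re+t)^2 + z.im^2 := by
    rw [Complex.sq_norm, Complex.normSq_apply]
    simp [Complex.add_re, Complex.add_im]
    ring
  have h2 : ‖z‖^2 = z.re^2+z.im^2 := by
    rw [Complex.sq_norm, Complex.normSq_apply]; ring
  have ha : 0 ≤ ‖z‖ := norm_nonneg z
  rw [h1]
  nlinarith [mul_le_mul_of_nonneg_left hsec (by linarith : (0:ℝ) ≤ 2*t),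
    mul_nonneg (by linarith : (0:ℝ) ≤ 1+γ) (sq_nonneg (‖z‖ - t))]

lemma re_cpow_half_nonneg (w : ℂ) : 0 ≤ (w ^ ((1:ℂ)/2)).re := by
  rcases eq_or_ne w 0 with h|h
  · simp [h, Complex.zero_cpow (by norm_num : (1:ℂ)/2 ≠ 0)]
  · rw [Complex.cpow_def_of_ne_zero h, Complex.exp_re]
    apply mul_nonneg (Real.exp_nonneg _)
    have him : (Complex.log w * ((1:ℂ)/2)).im = w.arg / 2 := by
      simp [Complex.mul_im, Complex.log_im, Complex.log_re]
      ring
    rw [him]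
    refine Real.cos_nonneg_of_mem_Icc ⟨by linarith [Complex.neg_pi_lt_arg w], by linarith [Complex.arg_le_pi w]⟩


lemma aux_Q (x y A e cq : ℝ) (hx : 0 ≤ x) (hA : 0 ≤ A) (he : 5/4 ≤ e) (he' : e ≤ 13/10)
    (hc : 33/10 ≤ cq) (hc' : cq ≤ 17/5) :
    ((x^2+y^2+A^2)/20)^2 ≤ (x^2-y^2+e*A*x+cq*A^2)^2 + (y*(2*x+e*A))^2 := by
  obtain ⟨S, hS⟩ : ∃ S : ℝ, S = x^2+e*A*x+cq*A^2 := ⟨_, rfl⟩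
  have hAx : 0 ≤ e*A*x := mul_nonneg (mul_nonneg (by linarith) hA) hx
  have hS0 : x^2 + A^2 ≤ S := by rw [hS]; nlinarith [sq_nonneg A]
  have hSnn : (0:ℝ) ≤ S := le_trans (by positivity) hS0
  have h1 : x^2-y^2+e*A*x+cq*A^2 = S - y^2 := by rw [hS]; ring
  rw [h1]
  rcases le_or_gt (y^2) (S/2) with hy | hy
  · have h2 : (x^2+y^2+A^2)/20 ≤ S - y^2 := by linarith
    have h3 := pow_le_pow_left₀ (by positivity : (0:ℝ) ≤ (x^2+y^2+A^2)/20) h2 2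
    nlinarith [sq_nonneg (y*(2*x+e*A))]
  rcases le_or_gt (2*S) (y^2) with hy2 | hy2
  · have h2 : (x^2+y^2+A^2)/20 ≤ y^2 - S := by linarith
    have h3 := pow_le_pow_left₀ (by positivity : (0:ℝ) ≤ (x^2+y^2+A^2)/20) h2 2
    nlinarith [sq_nonneg (y*(2*x+e*A))]
  · have he2 : 25/16 ≤ e*e := by nlinarith
    have hterm : (125/272)*cq*A^2 ≤ e*e*A^2 := by
      nlinarith [sq_nonneg A, mul_le_mul_of_nonneg_right hc' (sq_nonneg A),
        mul_le_mul_of_nonneg_right he2 (sq_nonneg A)]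
    have h2x : (125/272)*S ≤ (2*x+e*A)^2 := by
      rw [hS]; nlinarith [hterm, hAx, sq_nonneg x, sq_nonneg A]
    have hIm : (S/2) * ((125/272)*S) ≤ y^2 * (2*x+e*A)^2 := by
      apply mul_le_mul (le_of_lt hy) h2x (by positivity) (sq_nonneg y)
    have hup : x^2+y^2+A^2 ≤ 3*S := by linarith
    have hupnn : (0:ℝ) ≤ x^2+y^2+A^2 := by positivity
    have h4 : (x^2+y^2+A^2)^2 ≤ 9*S^2 := by nlinarith [mul_self_le_mul_self hupnn hup]
    have heq : (y*(2*x+e*A))^2 = y^2*(2*x+e*A)^2 := by ring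
    linarith [h4, hIm, sq_nonneg (S - y^2), heq, sq_nonneg S]

/-- Let `0 < ε < π/2`, `μ > 0`, and for `λ` in the sector `Σ_{ε,0}` and `A ≥ 0` let
`B = (μ⁻¹λ + A²)^{1/2}` with `Re B > 0` (principal square root).  Then
`D₃ = B³ + AB² + 3A²B − A³` satisfies
`c(|λ|^{1/2}+A)³ ≤ |D₃| ≤ C(|λ|^{1/2}+A)³` for constants `c, C > 0` depending only
on `ε` and `μ`. -/
theorem D3_two_sided_estimate (ε μ : ℝ) (hε : 0 < ε) (hε' : ε < Real.pi / 2) (hμ : 0 < μ) :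
    ∃ c C : ℝ, 0 < c ∧ 0 < C ∧
      ∀ (l : ℂ) (A : ℝ), l ≠ 0 → |l.arg| ≤ Real.pi - ε → 0 ≤ A →
        ∀ B : ℂ, B = ((μ : ℂ)⁻¹ * l + (A : ℂ) ^ 2) ^ ((1 : ℂ) / 2) →
          c * (‖l‖ ^ ((1 : ℝ) / 2) + A) ^ 3
              ≤ ‖B ^ 3 + (A : ℂ) * B ^ 2 + 3 * (A : ℂ) ^ 2 * B - (A : ℂ) ^ 3‖ ∧
          ‖B ^ 3 + (A : ℂ) * B ^ 2 + 3 * (A : ℂ) ^ 2 * B - (A : ℂ) ^ 3‖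
              ≤ C * (‖l‖ ^ ((1 : ℝ) / 2) + A) ^ 3 := by
  -- the real root r of r³+r²+3r-1 = 0 in [1/4, 3/10]
  obtain ⟨r, hrmem, hr⟩ : ∃ r : ℝ, r ∈ Set.Icc (1/4:ℝ) (3/10) ∧ r^3+r^2+3*r-1 = 0 := by
    have hcont : ContinuousOn (fun t : ℝ => t^3+t^2+3*t-1) (Set.Icc (1/4) (3/10)) :=
      (by continuity : Continuous fun t : ℝ => t^3+t^2+3*t-1).continuousOn
    have h := intermediate_value_Icc (by norm_num : (1/4:ℝ) ≤ 3/10) hcont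
    have h0 : (0:ℝ) ∈ Set.Icc ((fun t : ℝ => t^3+t^2+3*t-1) (1/4)) ((fun t : ℝ => t^3+t^2+3*t-1) (3/10)) := by
      simp only [Set.mem_Icc]; norm_num
    obtain ⟨r, hrmem, hr0⟩ := h h0
    exact ⟨r, hrmem, hr0⟩
  obtain ⟨hr1, hr2⟩ := hrmem
  -- constants
  have hπ := Real.pi_pos
  have hγpos : 0 < Real.cos ε := Real.cos_pos_of_mem_Ioo ⟨by linarith, hε'⟩
  have hγ1 : Real.cos ε < 1 := by
    have := Real.cos_lt_cos_of_nonneg_of_le_pi (le_refl 0) (by linarith) hε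
    simpa using this
  have hγm : (-1:ℝ) ≤ Real.cos ε := Real.neg_one_le_cos ε
  have hd2 : (0:ℝ) < (1 - Real.cos ε)/2 := by linarith
  set s := Real.sqrt ((1 - Real.cos ε)/2) with hs_def
  have hs : 0 < s := Real.sqrt_pos.2 hd2
  have hs2 : s^2 = (1 - Real.cos ε)/2 := Real.sq_sqrt hd2.le
  have hm : (0:ℝ) < μ⁻¹ := by positivity
  set mn := min μ⁻¹ 1 with hmn_def
  have hmn0 : 0 < mn := lt_min hm one_pos
  set c5 := s * mn / 2 with hc5_def
  have hc5 : 0 < c5 := by positivity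
  have hk0 : 0 < 1 - r^2 := by nlinarith
  have hcq1 : (33:ℝ)/10 ≤ 3+r+r^2 := by nlinarith
  have hcq2 : 3+r+r^2 ≤ (17:ℝ)/5 := by nlinarith
  set sq2 := Real.sqrt 2 with hsq2_def
  have hsq2 : 0 < sq2 := Real.sqrt_pos.2 (by norm_num)
  have hsq2sq : sq2^2 = 2 := Real.sq_sqrt (by norm_num)
  set M1 := Real.sqrt (max μ⁻¹ 1) with hM1_def
  have hM1 : 0 < M1 := Real.sqrt_pos.2 (lt_max_of_lt_right one_pos)
  have hM1sq : M1^2 = max μ⁻¹ 1 := Real.sq_sqrt (le_trans one_pos.le (le_max_right _ _))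
  clear_value s mn c5 sq2 M1
  refine ⟨((s*(1-r^2)/2*Real.sqrt c5)/sq2) * (c5/20), M1^3+M1^2+3*M1+1, ?_, ?_, ?_⟩
  · have h1 : 0 < Real.sqrt c5 := Real.sqrt_pos.2 hc5
    have h2 : 0 < s*(1-r^2)/2*Real.sqrt c5 := by positivity
    positivity
  · positivity
  intro l A hl harg hA B hB
  set z := (μ:ℂ)⁻¹ * l with hz_def
  clear_value z
  have hz0 : z ≠ 0 := by
    rw [hz_def]
    apply mul_ne_zero _ hl
    simp [inv_ne_zero, Complex.ofReal_ne_zero, hμ.ne']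
  have hzabs : ‖z‖ = μ⁻¹ * ‖l‖ := by
    rw [hz_def, norm_mul, norm_inv, Complex.norm_real, Real.norm_eq_abs, abs_of_pos hμ]
  have hzarg : z.arg = l.arg := by
    have hzz : z = ((μ⁻¹ : ℝ) : ℂ) * l := by rw [hz_def]; push_cast; ring
    rw [hzz]; exact Complex.arg_real_mul l hm
  have hsecz : -(Real.cos ε * ‖z‖) ≤ z.re := by
    have h1' : Real.cos (Real.pi - ε) ≤ Real.cos |z.arg| :=
      Real.cos_le_cos_of_nonneg_of_le_pi (abs_nonneg _) (by linarith)
        (by rw [hzarg]; exact harg)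
    have h1 : Real.cos (Real.pi - ε) ≤ Real.cos z.arg := by rwa [Real.cos_abs] at h1'
    rw [Real.cos_pi_sub] at h1
    have habne : ‖z‖ ≠ 0 := norm_ne_zero_iff.mpr hz0
    have h2 : z.re = ‖z‖ * Real.cos z.arg := by
      rw [Complex.cos_arg hz0, mul_comm, div_mul_cancel₀ _ habne]
    linarith [mul_le_mul_of_nonneg_left h1 (norm_nonneg z)]
  have hw0 : z + (A:ℂ)^2 ≠ 0 := by
    intro h
    have hzval : z = ((-(A^2) : ℝ) : ℂ) := by push_cast; linear_combination h
    rcases eq_or_lt_of_le hA with hA0 | hA0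
    · apply hz0; rw [hzval, ← hA0]; norm_num
    · have : z.arg = Real.pi := by rw [hzval]; exact Complex.arg_ofReal_of_neg (neg_lt_zero.mpr (pow_pos hA0 2))
      rw [← hzarg] at harg
      rw [this, abs_of_pos hπ] at harg
      linarith
  have hB2 : B^2 = z + (A:ℂ)^2 := by
    rw [hB, sq, ← Complex.cpow_add _ _ hw0]
    norm_num
  have hBne : B ≠ 0 := by
    intro h
    exact hw0 (by rw [← hB2, h]; ring)
  have hxre : 0 ≤ B.re := hB ▸ re_cpow_half_nonneg _
  have hab : 0 < ‖B‖ := norm_pos_iff.mpr hBne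
  have habsq : (‖B‖)^2 = ‖z + (A:ℂ)^2‖ := by
    rw [← hB2, norm_pow]
  have hcastA : (((A^2 : ℝ)) : ℂ) = (A:ℂ)^2 := by push_cast; ring
  have hup : (‖B‖)^2 ≤ ‖z‖ + A^2 := by
    rw [habsq]
    refine le_trans (norm_add_le _ _) ?_
    simp [norm_pow, Complex.norm_real, Real.norm_eq_abs, _root_.abs_of_nonneg hA]
  have hlow : s * (‖z‖ + A^2) ≤ (‖B‖)^2 := by
    have h0 := sector_est z (A^2) (Real.cos ε) (by positivity) hγ1.le hγm hsecz
    rw [hcastA, ← habsq] at h0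
    have h' : (s*(‖z‖ + A^2))^2 ≤ ((‖B‖)^2)^2 := by
      rw [mul_pow, hs2]; exact h0
    exact le_of_pow_le_pow_left₀ two_ne_zero (by positivity) h'
  -- L and P
  set L := ‖l‖ ^ ((1:ℝ)/2) with hL_def
  have hL0 : 0 ≤ L := Real.rpow_nonneg (norm_nonneg l) _
  have hL2 : L^2 = ‖l‖ := by
    rw [hL_def, ← Real.rpow_natCast (‖l‖ ^ ((1:ℝ)/2)) 2,
      ← Real.rpow_mul (norm_nonneg l)]
    norm_num
  clear_value L
  set P := L + A with hP_def
  have hP0 : 0 ≤ P := by positivity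
  clear_value P
  set N2 := (‖B‖)^2 + A^2 with hN2_def
  have hN2pos : 0 < N2 := by rw [hN2_def]; positivity
  clear_value N2
  have hzL : ‖z‖ = μ⁻¹ * L^2 := by rw [hzabs, hL2]
  have hmn1 : mn ≤ μ⁻¹ := by rw [hmn_def]; exact min_le_left _ _
  have hmn2 : mn ≤ 1 := by rw [hmn_def]; exact min_le_right _ _
  have hN2P : c5 * P^2 ≤ N2 := by
    have hlow' : s * (μ⁻¹ * L^2 + A^2) ≤ (‖B‖)^2 := by rw [← hzL]; exact hlow
    have t1 : s*mn*L^2 ≤ s*μ⁻¹*L^2 :=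
      mul_le_mul_of_nonneg_right (mul_le_mul_of_nonneg_left hmn1 hs.le) (sq_nonneg L)
    have t2 : s*mn*A^2 ≤ s*1*A^2 :=
      mul_le_mul_of_nonneg_right (mul_le_mul_of_nonneg_left hmn2 hs.le) (sq_nonneg A)
    have t3 : (L+A)^2 ≤ 2*L^2 + 2*A^2 := by linarith [sq_nonneg (L-A)]
    have hs1 : s ≤ 1 := by
      rw [hs_def]
      have : ((1 - Real.cos ε)/2 : ℝ) ≤ 1 := by linarith
      calc Real.sqrt ((1 - Real.cos ε)/2) ≤ Real.sqrt 1 := Real.sqrt_le_sqrt this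
        _ = 1 := Real.sqrt_one
    calc c5 * P^2 = s*mn/2*(L+A)^2 := by rw [hc5_def, hP_def]
      _ ≤ s*mn/2*(2*L^2+2*A^2) := mul_le_mul_of_nonneg_left t3 (by positivity)
      _ = s*mn*L^2 + s*mn*A^2 := by ring
      _ ≤ s*μ⁻¹*L^2 + s*1*A^2 := add_le_add t1 t2
      _ = s*(μ⁻¹*L^2 + A^2) := by ring
      _ ≤ (‖B‖)^2 := hlow'
      _ ≤ (‖B‖)^2 + A^2 := by linarith [sq_nonneg A]
      _ = N2 := by rw [hN2_def]
  -- factorization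
  have hrc : (r:ℂ)^3 + (r:ℂ)^2 + 3*(r:ℂ) - 1 = 0 := by exact_mod_cast congrArg (fun x : ℝ => (x:ℂ)) hr
  have hfac : B^3 + (A:ℂ)*B^2 + 3*(A:ℂ)^2*B - (A:ℂ)^3
      = (B - (r:ℂ)*(A:ℂ)) * (B^2 + (1+(r:ℂ))*(A:ℂ)*B + (3+(r:ℂ)+(r:ℂ)^2)*(A:ℂ)^2) := by
    linear_combination (A:ℂ)^3 * hrc
  have hD : ‖B^3 + (A:ℂ)*B^2 + 3*(A:ℂ)^2*B - (A:ℂ)^3‖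
      = ‖B - (r:ℂ)*(A:ℂ)‖
        * ‖B^2 + (1+(r:ℂ))*(A:ℂ)*B + (3+(r:ℂ)+(r:ℂ)^2)*(A:ℂ)^2‖ := by
    rw [hfac, norm_mul]
  -- Q bound
  have hQre : (B^2 + (1+(r:ℂ))*(A:ℂ)*B + (3+(r:ℂ)+(r:ℂ)^2)*(A:ℂ)^2).re
      = B.re^2 - B.im^2 + (1+r)*A*B.re + (3+r+r^2)*A^2 := by
    simp [Complex.add_re, Complex.mul_re, Complex.mul_im, Complex.add_im,
      Complex.ofReal_re, Complex.ofReal_im, pow_two]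
  have hQim : (B^2 + (1+(r:ℂ))*(A:ℂ)*B + (3+(r:ℂ)+(r:ℂ)^2)*(A:ℂ)^2).im
      = B.im*(2*B.re + (1+r)*A) := by
    simp [Complex.add_re, Complex.mul_re, Complex.mul_im, Complex.add_im,
      Complex.ofReal_re, Complex.ofReal_im, pow_two]
    ring
  have hBresq : (‖B‖)^2 = B.re^2 + B.im^2 := by
    rw [Complex.sq_norm, Complex.normSq_apply]; ring
  have hQ : N2/20 ≤ ‖B^2 + (1+(r:ℂ))*(A:ℂ)*B + (3+(r:ℂ)+(r:ℂ)^2)*(A:ℂ)^2‖ := by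
    have h1 : (‖B^2 + (1+(r:ℂ))*(A:ℂ)*B + (3+(r:ℂ)+(r:ℂ)^2)*(A:ℂ)^2‖)^2
        = (B.re^2 - B.im^2 + (1+r)*A*B.re + (3+r+r^2)*A^2)^2
          + (B.im*(2*B.re + (1+r)*A))^2 := by
      rw [Complex.sq_norm, Complex.normSq_apply, ← hQre, ← hQim]; ring
    have h2 := aux_Q B.re B.im A (1+r) (3+r+r^2) hxre hA (by linarith) (by linarith)
      hcq1 hcq2
    have h3 : (N2/20)^2 ≤ (‖B^2 + (1+(r:ℂ))*(A:ℂ)*B + (3+(r:ℂ)+(r:ℂ)^2)*(A:ℂ)^2‖)^2 := by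
      rw [h1, hN2_def, hBresq]
      convert h2 using 2
    exact le_of_pow_le_pow_left₀ two_ne_zero (norm_nonneg _) h3
  -- bound for |B - rA|
  set sN := Real.sqrt N2 with hsN_def
  have hsNpos : 0 < sN := Real.sqrt_pos.2 hN2pos
  have hsNsq : sN^2 = N2 := Real.sq_sqrt hN2pos.le
  clear_value sN
  have hprod : (B - (r:ℂ)*(A:ℂ)) * (B + (r:ℂ)*(A:ℂ)) = z + (((1-r^2)*A^2 : ℝ) : ℂ) := by
    push_cast
    linear_combination hB2
  have hZk2 : (1 - Real.cos ε)/2 * (‖z‖ + (1-r^2)*A^2)^2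
      ≤ (‖z + (((1-r^2)*A^2 : ℝ) : ℂ)‖)^2 :=
    sector_est z ((1-r^2)*A^2) (Real.cos ε) (mul_nonneg hk0.le (sq_nonneg A)) hγ1.le hγm hsecz
  have hZk : s * (‖z‖ + (1-r^2)*A^2) ≤ ‖z + (((1-r^2)*A^2 : ℝ) : ℂ)‖ := by
    have h' : (s * (‖z‖ + (1-r^2)*A^2))^2 ≤ (‖z + (((1-r^2)*A^2 : ℝ) : ℂ)‖)^2 := by
      rw [mul_pow, hs2]; exact hZk2
    refine le_of_pow_le_pow_left₀ two_ne_zero (norm_nonneg _) h'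
  have hkN : (1-r^2) * N2 ≤ 2*(‖z‖ + (1-r^2)*A^2) := by
    have h1 : (1-r^2) * (‖B‖)^2 ≤ (1-r^2)*(‖z‖ + A^2) :=
      mul_le_mul_of_nonneg_left hup hk0.le
    have h2 : (0:ℝ) ≤ ‖z‖ := norm_nonneg z
    have h3 : (1-r^2) ≤ 1 := by linarith [sq_nonneg r]
    rw [hN2_def]
    linarith [h1, mul_le_mul_of_nonneg_right h3 h2, mul_nonneg hk0.le (sq_nonneg A)]
  have hplus : ‖B + (r:ℂ)*(A:ℂ)‖ ≤ sq2 * sN := by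
    have h1 : ‖B + (r:ℂ)*(A:ℂ)‖ ≤ ‖B‖ + A := by
      refine le_trans (norm_add_le _ _) ?_
      have : ‖(r:ℂ)*(A:ℂ)‖ = r*A := by
        rw [norm_mul, Complex.norm_real, Real.norm_eq_abs, Complex.norm_real, Real.norm_eq_abs,
          _root_.abs_of_nonneg (by linarith : (0:ℝ) ≤ r), _root_.abs_of_nonneg hA]
      rw [this]
      have : r*A ≤ 1*A := mul_le_mul_of_nonneg_right (by linarith) hA
      linarith
    refine le_trans h1 ?_
    have h2 : (‖B‖ + A)^2 ≤ (sq2*sN)^2 := by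
      rw [mul_pow, hsq2sq, hsNsq, hN2_def]
      linarith [sq_nonneg (‖B‖ - A)]
    exact le_of_pow_le_pow_left₀ two_ne_zero (by positivity) h2
  have hBmr : (s*(1-r^2)/2*sN)/sq2 ≤ ‖B - (r:ℂ)*(A:ℂ)‖ := by
    rw [div_le_iff₀ hsq2]
    have h4 : (s*(1-r^2)/2 * sN) * sN ≤ (‖B - (r:ℂ)*(A:ℂ)‖ * sq2) * sN := by
      have e1 : (s*(1-r^2)/2 * sN) * sN = s*((1-r^2)/2 * N2) := by rw [← hsNsq]; ring
      have e2 : (‖B - (r:ℂ)*(A:ℂ)‖ * sq2) * sN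
          = ‖B - (r:ℂ)*(A:ℂ)‖ * (sq2 * sN) := by ring
      rw [e1, e2]
      have step1 : s*((1-r^2)/2 * N2) ≤ s*(‖z‖ + (1-r^2)*A^2) := by
        apply mul_le_mul_of_nonneg_left _ hs.le
        linarith
      have step2 : s*(‖z‖ + (1-r^2)*A^2)
          ≤ ‖B - (r:ℂ)*(A:ℂ)‖ * ‖B + (r:ℂ)*(A:ℂ)‖ := by
        rw [← norm_mul, hprod]; exact hZk
      have step3 : ‖B - (r:ℂ)*(A:ℂ)‖ * ‖B + (r:ℂ)*(A:ℂ)‖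
          ≤ ‖B - (r:ℂ)*(A:ℂ)‖ * (sq2 * sN) :=
        mul_le_mul_of_nonneg_left hplus (norm_nonneg _)
      exact le_trans step1 (le_trans step2 step3)
    exact (mul_le_mul_iff_of_pos_right hsNpos).mp h4
  -- lower bound
  have hsc5 : 0 < Real.sqrt c5 := Real.sqrt_pos.2 hc5
  have hsc5sq : (Real.sqrt c5)^2 = c5 := Real.sq_sqrt hc5.le
  have hsNP : Real.sqrt c5 * P ≤ sN := by
    have h' : (Real.sqrt c5 * P)^2 ≤ sN^2 := by
      rw [mul_pow, hsc5sq, hsNsq]; exact hN2P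
    exact le_of_pow_le_pow_left₀ two_ne_zero hsNpos.le h'
  constructor
  · rw [hD]
    calc ((s*(1-r^2)/2*Real.sqrt c5)/sq2) * (c5/20) * P^3
        = ((s*(1-r^2)/2*(Real.sqrt c5*P))/sq2) * ((c5*P^2)/20) := by ring
      _ ≤ ((s*(1-r^2)/2*sN)/sq2) * (N2/20) := by
          have hnn : (0:ℝ) ≤ s*(1-r^2)/2 := div_nonneg (mul_nonneg hs.le hk0.le) (by norm_num)
          apply mul_le_mul
          · exact (div_le_div_iff_of_pos_right hsq2).2 (mul_le_mul_of_nonneg_left hsNP hnn)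
          · linarith
          · positivity
          · exact div_nonneg (mul_nonneg hnn hsNpos.le) hsq2.le
      _ ≤ ‖B - (r:ℂ)*(A:ℂ)‖
            * ‖B^2 + (1+(r:ℂ))*(A:ℂ)*B + (3+(r:ℂ)+(r:ℂ)^2)*(A:ℂ)^2‖ := by
          apply mul_le_mul hBmr hQ (by positivity) (norm_nonneg _)
  · -- upper bound
    have hablep : ‖B‖ ≤ M1 * P := by
      have h1 : (‖B‖)^2 ≤ (M1*P)^2 := by
        rw [mul_pow, hM1sq]
        have h2 : ‖z‖ + A^2 = μ⁻¹*L^2 + A^2 := by rw [hzL]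
        have h3 : μ⁻¹ ≤ max μ⁻¹ 1 := le_max_left _ _
        have h4 : (1:ℝ) ≤ max μ⁻¹ 1 := le_max_right _ _
        have h5 : μ⁻¹*L^2 ≤ (max μ⁻¹ 1)*L^2 := mul_le_mul_of_nonneg_right h3 (sq_nonneg L)
        have h6 : A^2 ≤ (max μ⁻¹ 1)*A^2 := by
          linarith [mul_le_mul_of_nonneg_right h4 (sq_nonneg A)]
        have h9 : (max μ⁻¹ 1)*(L^2+A^2) ≤ (max μ⁻¹ 1)*P^2 :=
          mul_le_mul_of_nonneg_left (by rw [hP_def]; linarith [mul_nonneg hL0 hA])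
            (le_trans one_pos.le h4)
        linarith [hup, h2, h5, h6, h9]
      exact le_of_pow_le_pow_left₀ two_ne_zero (by positivity) h1
    have hAP : A ≤ P := by rw [hP_def]; linarith
    have htri : ‖B^3 + (A:ℂ)*B^2 + 3*(A:ℂ)^2*B - (A:ℂ)^3‖
        ≤ (‖B‖)^3 + A*(‖B‖)^2 + 3*A^2*(‖B‖) + A^3 := by
      have e3 : ‖B^3‖ = (‖B‖)^3 := norm_pow _ _
      have e2 : ‖(A:ℂ)*B^2‖ = A*(‖B‖)^2 := by
        rw [norm_mul, norm_pow, Complex.norm_real, Real.norm_eq_abs, _root_.abs_of_nonneg hA]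
      have e1 : ‖3*(A:ℂ)^2*B‖ = 3*A^2*(‖B‖) := by
        rw [norm_mul, norm_mul, norm_pow, Complex.norm_real, Real.norm_eq_abs, _root_.abs_of_nonneg hA]
        norm_num
      have e0 : ‖(A:ℂ)^3‖ = A^3 := by
        rw [norm_pow, Complex.norm_real, Real.norm_eq_abs, _root_.abs_of_nonneg hA]
      calc ‖B^3 + (A:ℂ)*B^2 + 3*(A:ℂ)^2*B - (A:ℂ)^3‖
          ≤ ‖B^3 + (A:ℂ)*B^2 + 3*(A:ℂ)^2*B‖ + ‖(A:ℂ)^3‖ := by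
            rw [sub_eq_add_neg]
            refine le_trans (norm_add_le _ _) ?_
            rw [norm_neg]
        _ ≤ ‖B^3 + (A:ℂ)*B^2‖ + ‖3*(A:ℂ)^2*B‖ + ‖(A:ℂ)^3‖ := by
            have := norm_add_le (B^3 + (A:ℂ)*B^2) (3*(A:ℂ)^2*B)
            linarith
        _ ≤ ‖B^3‖ + ‖(A:ℂ)*B^2‖ + ‖3*(A:ℂ)^2*B‖
              + ‖(A:ℂ)^3‖ := by
            have := norm_add_le (B^3) ((A:ℂ)*B^2)
            linarith
        _ = (‖B‖)^3 + A*(‖B‖)^2 + 3*A^2*(‖B‖) + A^3 := by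
            rw [e3, e2, e1, e0]
    have habnn : 0 ≤ ‖B‖ := norm_nonneg B
    have f3 : (‖B‖)^3 ≤ M1^3*P^3 := by
      calc (‖B‖)^3 ≤ (M1*P)^3 := pow_le_pow_left₀ habnn hablep 3
        _ = M1^3*P^3 := by ring
    have f2 : A*(‖B‖)^2 ≤ M1^2*P^3 := by
      have h := pow_le_pow_left₀ habnn hablep 2
      calc A*(‖B‖)^2 ≤ P*(M1*P)^2 :=
            mul_le_mul hAP h (by positivity) hP0
        _ = M1^2*P^3 := by ring
    have f1 : 3*A^2*(‖B‖) ≤ 3*M1*P^3 := by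
      have h := pow_le_pow_left₀ hA hAP 2
      have h' : A^2*(‖B‖) ≤ P^2*(M1*P) :=
        mul_le_mul h hablep habnn (by positivity)
      calc 3*A^2*(‖B‖) = 3*(A^2*(‖B‖)) := by ring
        _ ≤ 3*(P^2*(M1*P)) := by linarith
        _ = 3*M1*P^3 := by ring
    have f0 : A^3 ≤ P^3 := pow_le_pow_left₀ hA hAP 3
    calc ‖B^3 + (A:ℂ)*B^2 + 3*(A:ℂ)^2*B - (A:ℂ)^3‖
        ≤ (‖B‖)^3 + A*(‖B‖)^2 + 3*A^2*(‖B‖) + A^3 := htri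
      _ ≤ M1^3*P^3 + M1^2*P^3 + 3*M1*P^3 + P^3 := by linarith
      _ = (M1^3+M1^2+3*M1+1) * P^3 := by ring
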